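/- Class balance of the balanced isotropic DGUM: for every σ > 0 and every index k with 1 ≤ k ≤ P+1, the centered isotropic Gaussian measure μ_σ on ℝ^P assigns mass μ_σ(B_k) = 1/(P+1) to the Voronoï cell of each vertex of the unit P-simplex; equivalently, if Z is a centered isotropic Gaussian vector in ℝ^P, the probability that v_k is a nearest simplex vertex to Z equals 1/(P+1) for every k. -/

import Mathlib

open scoped BigOperators

/-- The all-ones vector in `ℝ^P`. -/
noncomputable def onesVec (P : ℕ) : EuclideanSpace ℝ (Fin P) :=
  (WithLp.equiv 2 (Fin P → ℝ)).symm fun _ => 1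

/-- The vertices of the unit `P`-simplex: for `j < P`,
`v_j = √((P+1)/P) • e_j − ((√(P+1) − 1)/(P√P)) • 𝟏`, and `v_{P+1} = −(1/√P) • 𝟏`. -/
noncomputable def simplexVertex (P : ℕ) (j : Fin (P + 1)) : EuclideanSpace ℝ (Fin P) :=
  if h : (j : ℕ) < P then
    Real.sqrt ((P + 1) / P) • EuclideanSpace.single ⟨(j : ℕ), h⟩ (1 : ℝ)
      - ((Real.sqrt (P + 1) - 1) / (P * Real.sqrt P)) • onesVec P
  else
    (-1 / Real.sqrt P) • onesVec P

/-- The Voronoï cell of the `k`-th simplex vertex: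
`B_k = {z : ‖z − v_k‖ ≤ ‖z − v_i‖ for all i}`. -/
def voronoiCell (P : ℕ) (k : Fin (P + 1)) : Set (EuclideanSpace ℝ (Fin P)) :=
  {z | ∀ i : Fin (P + 1), ‖z - simplexVertex P k‖ ≤ ‖z - simplexVertex P i‖}


/-- The centered isotropic Gaussian measure on `ℝ^P` with variance `σ²`, given by the density
`(2πσ²)^{−P/2} exp(−‖z‖²/(2σ²))` with respect to Lebesgue measure. -/
noncomputable def gaussianMeasure (P : ℕ) (σ : ℝ) :
    MeasureTheory.Measure (EuclideanSpace ℝ (Fin P)) :=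
  MeasureTheory.volume.withDensity fun z =>
    ENNReal.ofReal ((2 * Real.pi * σ ^ 2) ^ (-(P : ℝ) / 2) * Real.exp (-‖z‖ ^ 2 / (2 * σ ^ 2)))


open scoped RealInnerProductSpace
open MeasureTheory

lemma onesVec_apply (P : ℕ) (i : Fin P) : onesVec P i = 1 := rfl

lemma inner_ones_ones (P : ℕ) : ⟪onesVec P, onesVec P⟫ = P := by
  simp only [PiLp.inner_apply, onesVec_apply]; simp

lemma inner_single_ones (P : ℕ) (i : Fin P) :
    ⟪EuclideanSpace.single i (1:ℝ), onesVec P⟫ = 1 := by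
  simp [EuclideanSpace.inner_single_left, onesVec_apply]

lemma inner_ones_single (P : ℕ) (i : Fin P) :
    ⟪onesVec P, EuclideanSpace.single i (1:ℝ)⟫ = 1 := by
  simp [EuclideanSpace.inner_single_right, onesVec_apply]

lemma inner_single_single (P : ℕ) (i j : Fin P) :
    ⟪EuclideanSpace.single i (1:ℝ), EuclideanSpace.single j (1:ℝ)⟫
      = if i = j then 1 else 0 := by
  simp [EuclideanSpace.inner_single_left, EuclideanSpace.single_apply]


lemma gram (P : ℕ) (hP : 1 ≤ P) (j m : Fin (P + 1)) :
    ⟪simplexVertex P j, simplexVertex P m⟫ = if j = m then 1 else -(1 / (P : ℝ)) := by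
  have hP0 : (0:ℝ) < P := by exact_mod_cast hP
  set r : ℝ := Real.sqrt P with hrdef
  set s : ℝ := Real.sqrt (P + 1) with hsdef
  have hr : r ^ 2 = P := Real.sq_sqrt hP0.le
  have hr0 : 0 < r := Real.sqrt_pos.mpr hP0
  have hs : s ^ 2 = r ^ 2 + 1 := by rw [hr]; exact Real.sq_sqrt (by positivity)
  have hdiv : Real.sqrt ((P + 1) / P) = s / r := Real.sqrt_div (by positivity) _
  clear_value r s
  unfold simplexVertex
  rcases Nat.lt_or_ge (j : ℕ) P with hj | hj <;> rcases Nat.lt_or_ge (m : ℕ) P with hm | hm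
  · rw [dif_pos hj, dif_pos hm]
    simp only [inner_sub_left, inner_sub_right, real_inner_smul_left, real_inner_smul_right,
      inner_single_single, inner_single_ones, inner_ones_single, inner_ones_ones, hdiv]
    simp only [← hsdef, ← hrdef]
    simp only [← hr]
    have hjm : (j = m) ↔ ((⟨(j:ℕ), hj⟩ : Fin P) = ⟨(m:ℕ), hm⟩) := by
      simp [Fin.ext_iff]
    by_cases h : j = m
    · rw [if_pos h, if_pos (hjm.mp h)]
      field_simp
      linear_combination (r^2 - 1) * hs
    · rw [if_neg h, if_neg (fun hh => h (hjm.mpr hh))]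
      field_simp
      linear_combination (-1) * hs
  · have hne : j ≠ m := by intro h; rw [h] at hj; omega
    rw [dif_pos hj, dif_neg (by omega), if_neg hne]
    simp only [inner_sub_left, real_inner_smul_left, real_inner_smul_right,
      inner_single_ones, inner_ones_ones, hdiv]
    simp only [← hsdef, ← hrdef]
    simp only [← hr]
    field_simp
    ring
  · have hne : j ≠ m := by intro h; rw [h] at hj; omega
    rw [dif_neg (by omega), dif_pos hm, if_neg hne]
    simp only [inner_sub_right, real_inner_smul_left, real_inner_smul_right,
      inner_ones_single, inner_ones_ones, hdiv]
    simp only [← hsdef, ← hrdef]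
    simp only [← hr]
    field_simp
    ring
  · have hjm : j = m := by apply Fin.ext; have := j.isLt; have := m.isLt; omega
    rw [dif_neg (by omega), dif_neg (by omega), if_pos hjm]
    simp only [real_inner_smul_left, real_inner_smul_right, inner_ones_ones]
    simp only [← hsdef, ← hrdef]
    simp only [← hr]
    field_simp

section Pieces

variable {P : ℕ}

lemma measurableSet_voronoiCell (P : ℕ) (k : Fin (P + 1)) :
    MeasurableSet (voronoiCell P k) := by
  have : voronoiCell P k =
      ⋂ i, {z : EuclideanSpace ℝ (Fin P) | ‖z - simplexVertex P k‖ ≤ ‖z - simplexVertex P i‖} := by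
    ext z; simp [voronoiCell]
  rw [this]
  exact MeasurableSet.iInter fun i =>
    (isClosed_le ((continuous_id.sub continuous_const).norm)
      ((continuous_id.sub continuous_const).norm)).measurableSet

lemma iUnion_voronoiCell (P : ℕ) : (⋃ k, voronoiCell P k) = Set.univ := by
  apply Set.eq_univ_of_forall
  intro z
  obtain ⟨k, -, hk⟩ := Finset.exists_min_image Finset.univ
    (fun j : Fin (P + 1) => ‖z - simplexVertex P j‖) ⟨0, Finset.mem_univ 0⟩
  exact Set.mem_iUnion.mpr ⟨k, fun i => hk i (Finset.mem_univ i)⟩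

lemma norm_simplexVertex_sq (hP : 1 ≤ P) (j : Fin (P + 1)) :
    ‖simplexVertex P j‖ ^ 2 = 1 := by
  rw [← real_inner_self_eq_norm_sq, gram P hP, if_pos rfl]

lemma gaussian_total (P : ℕ) (σ : ℝ) (hσ : 0 < σ) :
    gaussianMeasure P σ Set.univ = 1 := by
  set E := EuclideanSpace ℝ (Fin P)
  have h2 : (0:ℝ) < 2 * Real.pi * σ ^ 2 := by positivity
  set b : ℝ := 1 / (2 * σ ^ 2) with hbdef
  have hb : 0 < b := by positivity
  set c : ℝ := (2 * Real.pi * σ ^ 2) ^ (-(P : ℝ) / 2) with hcdef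
  have hc : 0 < c := Real.rpow_pos_of_pos h2 _
  have hbC : (0:ℝ) < ((b : ℂ)).re := by simpa using hb
  have hI0 := GaussianFourier.integrable_cexp_neg_mul_sq_norm_add (V := E) hbC 0 0
  have hI : Integrable (fun v : E => Real.exp (-b * ‖v‖ ^ 2)) := by
    refine hI0.re.congr (Filter.Eventually.of_forall fun v => ?_)
    have h : (-(b:ℂ) * (‖v‖:ℂ) ^ 2 + 0 * (⟪(0:E), v⟫ : ℂ)) = ((-b * ‖v‖ ^ 2 : ℝ) : ℂ) := by
      push_cast; ring
    simp only [h, ← Complex.ofReal_exp]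
    simp [← Complex.ofReal_pow, ← Complex.ofReal_mul, ← Complex.ofReal_neg,
      Complex.exp_ofReal_re]
  have hexp : ∀ v : E, -‖v‖ ^ 2 / (2 * σ ^ 2) = -b * ‖v‖ ^ 2 := by
    intro v; rw [hbdef]; ring
  unfold gaussianMeasure
  rw [withDensity_apply _ MeasurableSet.univ, Measure.restrict_univ]
  have : ∀ v : E, ENNReal.ofReal
      ((2 * Real.pi * σ ^ 2) ^ (-(P : ℝ) / 2) * Real.exp (-‖v‖ ^ 2 / (2 * σ ^ 2)))
      = ENNReal.ofReal (c * Real.exp (-b * ‖v‖ ^ 2)) := by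
    intro v; rw [hexp v, ← hcdef]
  rw [lintegral_congr this,
    ← ofReal_integral_eq_lintegral_ofReal (hI.const_mul c)
      (Filter.Eventually.of_forall fun v => by positivity)]
  rw [integral_const_mul, GaussianFourier.integral_rexp_neg_mul_sq_norm hb]
  have hfr : (Module.finrank ℝ E : ℝ) = (P : ℝ) := by
    norm_cast; exact finrank_euclideanSpace_fin
  have hπb : Real.pi / b = 2 * Real.pi * σ ^ 2 := by
    rw [hbdef]; field_simp
  rw [hfr, hπb, hcdef, ← Real.rpow_add h2, neg_div, neg_add_cancel, Real.rpow_zero,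
    ENNReal.ofReal_one]

lemma simplexVertex_sub_ne_zero (hP : 1 ≤ P) {k i : Fin (P + 1)} (hki : k ≠ i) :
    simplexVertex P k - simplexVertex P i ≠ 0 := by
  intro h
  have h' : simplexVertex P k = simplexVertex P i := by
    have := sub_eq_zero.mp h; exact this
  have h1 : ⟪simplexVertex P k, simplexVertex P k⟫ = 1 := by rw [gram P hP, if_pos rfl]
  have h2 : ⟪simplexVertex P k, simplexVertex P i⟫ = -(1 / (P : ℝ)) := by
    rw [gram P hP, if_neg hki]
  rw [← h'] at h2
  rw [h1] at h2
  have hP0 : (0:ℝ) < P := by exact_mod_cast hP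
  have : -(1 / (P:ℝ)) < 1 := by
    have : 0 < 1 / (P:ℝ) := by positivity
    linarith
  rw [← h2] at this; exact lt_irrefl _ this

lemma inner_eq_on_overlap (hP : 1 ≤ P) {k i : Fin (P + 1)}
    {z : EuclideanSpace ℝ (Fin P)} (hzk : z ∈ voronoiCell P k) (hzi : z ∈ voronoiCell P i) :
    ⟪simplexVertex P k - simplexVertex P i, z⟫ = 0 := by
  have heq : ‖z - simplexVertex P k‖ = ‖z - simplexVertex P i‖ :=
    le_antisymm (hzk i) (hzi k)
  have hsq : ‖z - simplexVertex P k‖ ^ 2 = ‖z - simplexVertex P i‖ ^ 2 := by rw [heq]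
  rw [norm_sub_sq_real, norm_sub_sq_real, norm_simplexVertex_sq hP,
    norm_simplexVertex_sq hP] at hsq
  have : ⟪z, simplexVertex P k⟫ = ⟪z, simplexVertex P i⟫ := by linarith
  rw [inner_sub_left,
    show ⟪simplexVertex P k, z⟫ = ⟪z, simplexVertex P k⟫ from real_inner_comm _ _,
    show ⟪simplexVertex P i, z⟫ = ⟪z, simplexVertex P i⟫ from real_inner_comm _ _,
    this, sub_self]

lemma overlap_null (hP : 1 ≤ P) (σ : ℝ) {k i : Fin (P + 1)} (hki : k ≠ i) :
    gaussianMeasure P σ (voronoiCell P k ∩ voronoiCell P i) = 0 := by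
  set w := simplexVertex P k - simplexVertex P i with hw
  have hw0 : w ≠ 0 := simplexVertex_sub_ne_zero hP hki
  have hsub : voronoiCell P k ∩ voronoiCell P i ⊆ ((ℝ ∙ w)ᗮ : Submodule ℝ _) := by
    rintro z ⟨h1, h2⟩
    exact Submodule.mem_orthogonal_singleton_iff_inner_right.mpr (inner_eq_on_overlap hP h1 h2)
  have hne : (ℝ ∙ w)ᗮ ≠ ⊤ := by
    intro h
    have : w ∈ (ℝ ∙ w)ᗮ := h ▸ Submodule.mem_top
    have := Submodule.mem_orthogonal_singleton_iff_inner_right.mp this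
    exact hw0 (inner_self_eq_zero.mp this)
  have hvol : volume (((ℝ ∙ w)ᗮ : Submodule ℝ _) : Set (EuclideanSpace ℝ (Fin P))) = 0 :=
    Measure.addHaar_submodule volume _ hne
  exact measure_mono_null hsub ((withDensity_absolutelyContinuous _ _) hvol)

lemma cell_measure_eq (hP : 1 ≤ P) (σ : ℝ) (k i : Fin (P + 1)) :
    gaussianMeasure P σ (voronoiCell P k) = gaussianMeasure P σ (voronoiCell P i) := by
  rcases eq_or_ne k i with rfl | hki
  · rfl
  set v : Fin (P + 1) → EuclideanSpace ℝ (Fin P) := simplexVertex P with hv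
  set w : EuclideanSpace ℝ (Fin P) := v k - v i with hw
  have hw0 : w ≠ 0 := simplexVertex_sub_ne_zero hP hki
  set R := Submodule.reflection (𝕜 := ℝ) (ℝ ∙ w)ᗮ with hR
  have hRw : R w = -w := Submodule.reflection_orthogonalComplement_singleton_eq_neg w
  have hfix : ∀ x : EuclideanSpace ℝ (Fin P), ⟪w, x⟫ = 0 → R x = x := fun x hx =>
    Submodule.reflection_mem_subspace_eq_self (Submodule.mem_orthogonal_singleton_iff_inner_right.mpr hx)
  have hRm : ∀ m, R (v m) = v (Equiv.swap k i m) := by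
    intro m
    rcases eq_or_ne m k with rfl | hmk
    · rw [Equiv.swap_apply_left]
      have hu : R ((1/2 : ℝ) • (v m + v i)) = (1/2 : ℝ) • (v m + v i) := by
        apply hfix
        rw [real_inner_smul_right, hw, inner_sub_left, inner_add_right, inner_add_right,
          hv]
        simp only [gram P hP, if_pos rfl, if_neg hki, if_neg (Ne.symm hki)]
        ring
      have hd : R ((1/2 : ℝ) • w) = -((1/2 : ℝ) • w) := by
        rw [R.map_smul, hRw, smul_neg]
      have hvm : v m = (1/2 : ℝ) • (v m + v i) + (1/2 : ℝ) • w := by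
        rw [hw]; module
      rw [hvm, map_add, hu, hd, hw]; module
    rcases eq_or_ne m i with rfl | hmi
    · rw [Equiv.swap_apply_right]
      have hu : R ((1/2 : ℝ) • (v k + v m)) = (1/2 : ℝ) • (v k + v m) := by
        apply hfix
        rw [real_inner_smul_right, hw, inner_sub_left, inner_add_right, inner_add_right, hv]
        simp only [gram P hP, if_pos rfl, if_neg hki, if_neg (Ne.symm hki)]
        ring
      have hd : R ((1/2 : ℝ) • w) = -((1/2 : ℝ) • w) := by
        rw [R.map_smul, hRw, smul_neg]
      have hvm : v m = (1/2 : ℝ) • (v k + v m) + -((1/2 : ℝ) • w) := by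
        rw [hw]; module
      rw [hvm, map_add, hu, map_neg, hd, hw]; module
    · rw [Equiv.swap_apply_of_ne_of_ne hmk hmi]
      apply hfix
      rw [hw, inner_sub_left]
      have g1 : ⟪v k, v m⟫ = -(1 / (P : ℝ)) := by
        rw [hv]; rw [gram P hP, if_neg (Ne.symm hmk)]
      have g2 : ⟪v i, v m⟫ = -(1 / (P : ℝ)) := by
        rw [hv]; rw [gram P hP, if_neg (Ne.symm hmi)]
      rw [g1, g2, sub_self]
  have hnorm : ∀ (z : EuclideanSpace ℝ (Fin P)) (t : Fin (P + 1)),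
      ‖R z - v (Equiv.swap k i t)‖ = ‖z - v t‖ := by
    intro z t
    rw [← hRm t, ← map_sub]
    exact R.norm_map _
  have hkey : R ⁻¹' (voronoiCell P i) = voronoiCell P k := by
    ext z
    simp only [Set.mem_preimage, voronoiCell, Set.mem_setOf_eq, ← hv]
    constructor
    · intro h t
      calc ‖z - v k‖ = ‖R z - v i‖ := by rw [← hnorm z k, Equiv.swap_apply_left]
        _ ≤ ‖R z - v (Equiv.swap k i t)‖ := h _
        _ = ‖z - v t‖ := hnorm z t
    · intro h t
      calc ‖R z - v i‖ = ‖z - v k‖ := by rw [← hnorm z k, Equiv.swap_apply_left]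
        _ ≤ ‖z - v (Equiv.swap k i t)‖ := h _
        _ = ‖R z - v t‖ := by rw [← hnorm z (Equiv.swap k i t), Equiv.swap_apply_self]
  rw [← hkey]
  unfold gaussianMeasure
  rw [withDensity_apply _ (show MeasurableSet (⇑R ⁻¹' voronoiCell P i) by
      rw [hkey]; exact measurableSet_voronoiCell P k),
    withDensity_apply _ (measurableSet_voronoiCell P i)]
  have hcomp := R.measurePreserving.setLIntegral_comp_preimage_emb
    R.toHomeomorph.measurableEmbedding
    (fun z => ENNReal.ofReal
      ((2 * Real.pi * σ ^ 2) ^ (-(P : ℝ) / 2) * Real.exp (-‖z‖ ^ 2 / (2 * σ ^ 2))))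
    (voronoiCell P i)
  rw [← hcomp]
  apply lintegral_congr
  intro a
  rw [R.norm_map]

end Pieces

/-- Class balance of the balanced isotropic DGUM: the centered isotropic Gaussian measure
assigns mass `1/(P+1)` to the Voronoï cell of each vertex of the unit `P`-simplex, i.e. the
probability that `v_k` is a nearest simplex vertex to a centered isotropic Gaussian vector
equals `1/(P+1)` for every `k`. -/
theorem gaussianMeasure_voronoiCell_uniform (P : ℕ) (hP : 1 ≤ P) (σ : ℝ) (hσ : 0 < σ)
    (k : Fin (P + 1)) :
    gaussianMeasure P σ (voronoiCell P k) = 1 / (P + 1 : ENNReal) := by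
  have hdisj : Pairwise (Function.onFun (MeasureTheory.AEDisjoint (gaussianMeasure P σ))
      fun j => voronoiCell P j) := fun a b hab => overlap_null hP σ hab
  have hsum : ∑' j : Fin (P + 1), gaussianMeasure P σ (voronoiCell P j) = 1 := by
    rw [← measure_iUnion₀ hdisj (fun j => (measurableSet_voronoiCell P j).nullMeasurableSet),
      iUnion_voronoiCell, gaussian_total P σ hσ]
  rw [tsum_fintype] at hsum
  have hconst : ∀ j ∈ Finset.univ, gaussianMeasure P σ (voronoiCell P j)
      = gaussianMeasure P σ (voronoiCell P k) := fun j _ => cell_measure_eq hP σ j k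
  rw [Finset.sum_congr rfl hconst, Finset.sum_const, Finset.card_univ, Fintype.card_fin,
    nsmul_eq_mul] at hsum
  have hn0 : ((P + 1 : ℕ) : ENNReal) ≠ 0 := by simp
  have hnt : ((P + 1 : ℕ) : ENNReal) ≠ ⊤ := by simp
  have := (ENNReal.eq_div_iff hn0 hnt).mpr hsum
  rw [this]
  norm_cast
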